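/- Let p be a prime, t > 1 an integer coprime to p, and n a positive integer such that p^n ≡ 1 (mod t²). Then t·(p^n − 1) divides p^{nt} − 1, and the integer s := (p^{nt} − 1)/(t·(p^n − 1)) satisfies s ≡ 1 (mod t); in particular s is coprime to t and coprime to p. -/

import Mathlib

/-- Let `p` be a prime, `t > 1` an integer coprime to `p`, and `n` a positive integer
such that `p ^ n ≡ 1 (mod t²)`.  Then `t * (p ^ n − 1)` divides `p ^ (n * t) − 1`, and the
integer `s := (p ^ (n * t) − 1) / (t * (p ^ n − 1))` satisfies `s ≡ 1 (mod t)`; in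
particular `s` is coprime to `t` and coprime to `p`. -/
theorem stmt1 (p t n : ℕ) (hp : p.Prime) (ht : 1 < t) (htp : Nat.Coprime t p)
    (hn : 0 < n) (hmod : p ^ n ≡ 1 [MOD t ^ 2]) :
    t * (p ^ n - 1) ∣ p ^ (n * t) - 1 ∧
    (p ^ (n * t) - 1) / (t * (p ^ n - 1)) ≡ 1 [MOD t] ∧
    Nat.Coprime ((p ^ (n * t) - 1) / (t * (p ^ n - 1))) t ∧
    Nat.Coprime ((p ^ (n * t) - 1) / (t * (p ^ n - 1))) p := by
  set q := p ^ n with hq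
  have hq2 : 2 ≤ q := by
    calc 2 ≤ p := hp.two_le
    _ = p ^ 1 := (pow_one p).symm
    _ ≤ p ^ n := Nat.pow_le_pow_right hp.pos hn
  set S := ∑ i ∈ Finset.range t, q ^ i with hS
  have key : q ^ t - 1 = (q - 1) * S := by
    have := geom_sum_mul_add (q - 1) t
    rw [Nat.sub_add_cancel (by omega : 1 ≤ q)] at this
    rw [← hS, mul_comm] at this
    omega
  have hpow : p ^ (n * t) = q ^ t := by rw [pow_mul]
  -- each q^i ≡ 1 mod t², so S ≡ t mod t²
  have hSmod : S ≡ t [MOD t ^ 2] := by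
    have h1 : ∀ i, q ^ i % t ^ 2 = 1 % t ^ 2 := fun i => by
      simpa [Nat.ModEq] using hmod.pow i
    show S % t ^ 2 = t % t ^ 2
    have h2 := Finset.sum_nat_mod (Finset.range t) (t ^ 2) (fun i => q ^ i)
    have h3 := Finset.sum_nat_mod (Finset.range t) (t ^ 2) (fun _ => 1)
    simp only [h1] at h2
    simp only [Finset.sum_const, Finset.card_range, smul_eq_mul, mul_one] at h2 h3
    rw [hS, h2, ← h3]
  have hSt : t ≤ S := by
    calc t = ∑ _i ∈ Finset.range t, 1 := by simp
    _ ≤ S := Finset.sum_le_sum (fun i _ => Nat.one_le_pow _ _ (by omega))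
  have ht2dvd : t ^ 2 ∣ S - t := (Nat.modEq_iff_dvd' hSt).mp hSmod.symm
  have htdvdS : t ∣ S := by
    obtain ⟨k, hk⟩ := dvd_trans (by rw [sq]; exact Dvd.intro t rfl : t ∣ t ^ 2) ht2dvd
    exact ⟨1 + k, by rw [Nat.mul_add, mul_one]; omega⟩
  obtain ⟨m, hm⟩ := htdvdS
  have hm1 : 1 ≤ m := by nlinarith [ht.le]
  have hmain : p ^ (n * t) - 1 = t * (q - 1) * m := by
    rw [hpow, key, hm]; ring
  have hdvd : t * (q - 1) ∣ p ^ (n * t) - 1 := ⟨m, hmain⟩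
  have hpos : 0 < t * (q - 1) := Nat.mul_pos (by omega) (by omega)
  have hSpos : 0 < m := hm1
  have hdiv : (p ^ (n * t) - 1) / (t * (q - 1)) = m := by
    rw [hmain, Nat.mul_div_cancel_left _ hpos]
  have hmmod : m ≡ 1 [MOD t] := by
    have : t ∣ m - 1 := by
      have h4 : t ^ 2 ∣ t * (m - 1) := by
        have : t * (m - 1) = S - t := by rw [Nat.mul_sub, mul_one, ← hm]
        rw [this]; exact ht2dvd
      rw [sq] at h4
      exact (mul_dvd_mul_iff_left (by omega : t ≠ 0)).mp h4
    exact ((Nat.modEq_iff_dvd' hm1).mpr this).symm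
  have hcopt : Nat.Coprime m t := by
    obtain ⟨k, hk⟩ : t ∣ m - 1 := (Nat.modEq_iff_dvd' hm1).mp hmmod.symm
    have hd : Nat.gcd m t ∣ 1 := by
      have h1 : Nat.gcd m t ∣ m := Nat.gcd_dvd_left _ _
      have h2 : Nat.gcd m t ∣ m - 1 := hk ▸ Dvd.dvd.mul_right (Nat.gcd_dvd_right _ _) k
      have := Nat.dvd_sub h1 h2
      simpa [Nat.sub_sub_self hm1] using this
    exact Nat.eq_one_of_dvd_one hd
  have hcopp : Nat.Coprime m p := by
    have h2 : p ∣ q ^ t := dvd_pow (dvd_pow_self p hn.ne') (by omega)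
    have h3 : Nat.Coprime (q ^ t - 1) p := by
      refine (hp.coprime_iff_not_dvd.mpr ?_).symm
      intro hdd
      have hqt : 1 ≤ q ^ t := Nat.one_le_pow _ _ (by omega)
      have : p ∣ q ^ t - (q ^ t - 1) := Nat.dvd_sub h2 hdd
      rw [Nat.sub_sub_self hqt] at this
      exact hp.one_lt.ne' (Nat.eq_one_of_dvd_one this)
    exact Nat.Coprime.coprime_dvd_left ⟨t * (q - 1), by rw [← hpow, hmain]; ring⟩ h3
  exact ⟨hdvd, by rw [hdiv]; exact hmmod, by rw [hdiv]; exact hcopt, by rw [hdiv]; exact hcopp⟩
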